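/- The characteristic function χ := ζ^{-1}·ζ^rev of a weakly ranked poset P is a kernel, i.e., χ^{-1} = χ^rev. -/

import Mathlib

open Finset Polynomial


variable {P P₁ P₂ : Type*}

/-- A weak rank function on a poset, in the sense of Brenti/CF25. -/
def IsWeakRank [Preorder P] (rk : P → P → ℤ) : Prop :=
  (∀ s t : P, s < t → 0 < rk s t) ∧
    ∀ s u t : P, s ≤ u → u ≤ t → rk s t = rk s u + rk u t

noncomputable section
open scoped Classical

/-- Membership in the rank-bounded incidence algebra `J_rk(P)`:
functions on intervals with values in `ℤ[x]` of degree bounded by the rank. -/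
def InJ [Preorder P] (rk : P → P → ℤ) (a : P → P → Polynomial ℤ) : Prop :=
  (∀ s t : P, ¬ s ≤ t → a s t = 0) ∧
    ∀ s t : P, s ≤ t → ((a s t).natDegree : ℤ) ≤ rk s t

/-- Convolution product in the incidence algebra. -/
def conv [Fintype P] (a b : P → P → Polynomial ℤ) : P → P → Polynomial ℤ :=
  fun s t => ∑ u : P, a s u * b u t

/-- The identity (delta function) of the incidence algebra. -/
def delta : P → P → Polynomial ℤ := fun s t => if s = t then 1 else 0

/-- The reversal operation `(a^rev)_{s,t} = x^{rk(s,t)}·a_{s,t}(x⁻¹)`. -/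
def rev (rk : P → P → ℤ) (a : P → P → Polynomial ℤ) : P → P → Polynomial ℤ :=
  fun s t => (a s t).reflect (rk s t).toNat

/-- Entrywise tensor product of incidence functions on a product poset. -/
def tensor (a₁ : P₁ → P₁ → Polynomial ℤ) (a₂ : P₂ → P₂ → Polynomial ℤ) :
    P₁ × P₂ → P₁ × P₂ → Polynomial ℤ :=
  fun p q => a₁ p.1 q.1 * a₂ p.2 q.2

/-- The sum rank function on a product poset. -/
def prodRk (rk₁ : P₁ → P₁ → ℤ) (rk₂ : P₂ → P₂ → ℤ) : P₁ × P₂ → P₁ × P₂ → ℤ :=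
  fun p q => rk₁ p.1 q.1 + rk₂ p.2 q.2

/-- A kernel: an element of `J_rk(P)` which is invertible with `κ⁻¹ = κ^rev`. -/
def IsKernel [Preorder P] [Fintype P] (rk : P → P → ℤ) (κ : P → P → Polynomial ℤ) : Prop :=
  InJ rk κ ∧ conv κ (rev rk κ) = delta ∧ conv (rev rk κ) κ = delta

/-- The reduced kernel `κ̄`: `κ̄_{s,s} = -1` and `κ̄_{s,t} = κ_{s,t}/(x-1)` for `s ≠ t`. -/
def IsReducedKernel [Preorder P] (κ κb : P → P → Polynomial ℤ) : Prop :=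
  (∀ s : P, κb s s = -1) ∧ ∀ s t : P, s ≠ t → (X - 1) * κb s t = κ s t

/-- The Chow function `H = -κ̄⁻¹` associated to a reduced kernel `κ̄`. -/
def IsChowFunction [Preorder P] [Fintype P] (κb H : P → P → Polynomial ℤ) : Prop :=
  conv κb H = -delta ∧ conv H κb = -delta

/-- The right KLS function of `(P, κ)`. -/
def IsRightKLS [Preorder P] [Fintype P] (rk : P → P → ℤ)
    (κ f : P → P → Polynomial ℤ) : Prop :=
  InJ rk f ∧ (∀ s : P, f s s = 1) ∧
    (∀ s t : P, s < t → 2 * ((f s t).natDegree : ℤ) < rk s t) ∧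
    rev rk f = conv κ f

/-- The left KLS function of `(P, κ)`. -/
def IsLeftKLS [Preorder P] [Fintype P] (rk : P → P → ℤ)
    (κ g : P → P → Polynomial ℤ) : Prop :=
  InJ rk g ∧ (∀ s : P, g s s = 1) ∧
    (∀ s t : P, s < t → 2 * ((g s t).natDegree : ℤ) < rk s t) ∧
    rev rk g = conv g κ

/-- The zeta function of a poset. -/
def zeta [Preorder P] : P → P → Polynomial ℤ := fun s t => if s ≤ t then 1 else 0

/-- Convolution powers. -/
def convPow [Fintype P] (a : P → P → Polynomial ℤ) : ℕ → P → P → Polynomial ℤ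
  | 0 => delta
  | k + 1 => conv a (convPow a k)

/-- The inverse of a unitriangular element of the incidence algebra,
via the finite geometric series `∑ (I - a)^k`. -/
def invInc [Fintype P] (a : P → P → Polynomial ℤ) : P → P → Polynomial ℤ :=
  ∑ k ∈ Finset.range (Fintype.card P), convPow (delta - a) k

/-- The characteristic function `χ = ζ⁻¹ · ζ^rev` of a weakly ranked poset. -/
def charFn [Preorder P] [Fintype P] (rk : P → P → ℤ) : P → P → Polynomial ℤ :=
  conv (invInc zeta) (rev rk zeta)

/-- The reduced characteristic function `χ̄`. -/
def charFnRed [Preorder P] [Fintype P] (rk : P → P → ℤ) : P → P → Polynomial ℤ :=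
  fun s t => if s = t then -1 else charFn rk s t /ₘ (X - C 1)

/-- The Chow function `H = -χ̄⁻¹` of a weakly ranked poset w.r.t. the characteristic kernel. -/
def chowFn [Preorder P] [Fintype P] (rk : P → P → ℤ) : P → P → Polynomial ℤ :=
  invInc (-(charFnRed rk))

end

noncomputable section AuxKernel
open scoped Classical
namespace CharKernelAux

open Polynomial Finset

variable {P : Type*} [PartialOrder P] [Fintype P]

/-! ### Basic polynomial facts -/

lemma reflect_reflect (N : ℕ) (p : Polynomial ℤ) : (p.reflect N).reflect N = p := by
  ext i
  simp [Polynomial.coeff_reflect, Polynomial.revAt_invol]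

lemma natDegree_reflect_le {p : Polynomial ℤ} {N : ℕ} (hp : p.natDegree ≤ N) :
    (p.reflect N).natDegree ≤ N := by
  rw [Polynomial.natDegree_le_iff_coeff_eq_zero]
  intro i hi
  rw [Polynomial.coeff_reflect, Polynomial.revAt_eq_self_of_lt hi]
  exact Polynomial.coeff_eq_zero_of_natDegree_lt (lt_of_le_of_lt hp hi)

lemma reflect_sum {ι : Type*} (s : Finset ι) (f : ι → Polynomial ℤ) (N : ℕ) :
    (∑ i ∈ s, f i).reflect N = ∑ i ∈ s, (f i).reflect N := by
  induction s using Finset.induction with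
  | empty => simp
  | insert _ _ h ih => rw [Finset.sum_insert h, Finset.sum_insert h, Polynomial.reflect_add, ih]

/-! ### Matrix bridge -/

lemma of_id (M : Matrix P P (Polynomial ℤ)) : Matrix.of M = M := rfl

lemma conv_eq_mul (a b : P → P → Polynomial ℤ) :
    conv a b = (Matrix.of a * Matrix.of b : Matrix P P (Polynomial ℤ)) := by
  funext s t
  simp [conv, Matrix.mul_apply]

lemma delta_eq_one : (delta : P → P → Polynomial ℤ) = (1 : Matrix P P (Polynomial ℤ)) := by
  funext s t
  simp [delta, Matrix.one_apply]

lemma of_delta : Matrix.of (delta : P → P → Polynomial ℤ) = 1 := delta_eq_one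

lemma conv_assoc (a b c : P → P → Polynomial ℤ) :
    conv (conv a b) c = conv a (conv b c) := by
  rw [conv_eq_mul (conv a b) c, conv_eq_mul a (conv b c), conv_eq_mul a b, conv_eq_mul b c]
  simp only [of_id]
  rw [mul_assoc]

lemma conv_delta (a : P → P → Polynomial ℤ) : conv a delta = a := by
  rw [conv_eq_mul, of_delta, mul_one]; rfl

lemma delta_conv (a : P → P → Polynomial ℤ) : conv delta a = a := by
  rw [conv_eq_mul, of_delta, one_mul]; rfl

lemma of_delta_sub (a : P → P → Polynomial ℤ) :
    Matrix.of (delta - a) = 1 - Matrix.of a := by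
  funext s t
  simp [delta, Matrix.one_apply, Matrix.sub_apply, Pi.sub_apply]

lemma convPow_eq_pow (a : P → P → Polynomial ℤ) (k : ℕ) :
    convPow a k = ((Matrix.of a) ^ k : Matrix P P (Polynomial ℤ)) := by
  induction k with
  | zero => simpa [convPow] using delta_eq_one
  | succ k ih =>
    rw [convPow, conv_eq_mul, ih]
    simp only [of_id]
    rw [pow_succ']

lemma invInc_eq (a : P → P → Polynomial ℤ) :
    invInc a =
      ((∑ k ∈ Finset.range (Fintype.card P), (1 - Matrix.of a) ^ k :
        Matrix P P (Polynomial ℤ)) : P → P → Polynomial ℤ) := by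
  funext s t
  simp only [invInc, Finset.sum_apply, Matrix.sum_apply]
  refine Finset.sum_congr rfl fun k _ => ?_
  rw [convPow_eq_pow, of_delta_sub]

/-! ### Nilpotency of 1 - ζ and inverse of ζ -/

lemma nilpotent_aux (k : ℕ) (s t : P)
    (h : ((1 - Matrix.of (zeta : P → P → Polynomial ℤ)) ^ k) s t ≠ 0) :
    k + 1 ≤ (Finset.univ.filter fun u => s ≤ u ∧ u ≤ t).card := by
  induction k generalizing s t with
  | zero =>
    rw [pow_zero] at h
    have hst : s = t := by
      by_contra hne
      exact h (Matrix.one_apply_ne hne)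
    have hs : s ∈ Finset.univ.filter fun u => s ≤ u ∧ u ≤ t := by
      simp [hst.le]
    exact Finset.card_pos.mpr ⟨s, hs⟩
  | succ k ih =>
    rw [pow_succ', Matrix.mul_apply] at h
    obtain ⟨u, -, hu⟩ := Finset.exists_ne_zero_of_sum_ne_zero h
    have h1 : (1 - Matrix.of (zeta : P → P → Polynomial ℤ)) s u ≠ 0 :=
      fun hz => hu (by rw [hz, zero_mul])
    have h2 : ((1 - Matrix.of (zeta : P → P → Polynomial ℤ)) ^ k) u t ≠ 0 :=
      fun hz => hu (by rw [hz, mul_zero])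
    have hsu : s < u := by
      have hval : (1 - Matrix.of (zeta : P → P → Polynomial ℤ)) s u
          = (1 : Matrix P P (Polynomial ℤ)) s u - zeta s u := by
        simp [Matrix.sub_apply]
      by_cases he : s = u
      · exfalso; apply h1; rw [hval, he]
        simp [zeta, Matrix.one_apply]
      by_cases hle : s ≤ u
      · exact lt_of_le_of_ne hle he
      · exfalso; apply h1; rw [hval]
        simp [zeta, hle, Matrix.one_apply, he]
    have hA := ih u t h2
    set A := Finset.univ.filter fun v => u ≤ v ∧ v ≤ t with hAdef
    set B := Finset.univ.filter fun v => s ≤ v ∧ v ≤ t with hBdef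
    have hAne : A.Nonempty := Finset.card_pos.mp (by omega)
    obtain ⟨v, hv⟩ := hAne
    have hvm : u ≤ v ∧ v ≤ t := by simpa [hAdef] using hv
    have hst : s ≤ t := (hsu.le.trans hvm.1).trans hvm.2
    have hsubset : A ⊆ B := by
      intro w hw
      have hw' : u ≤ w ∧ w ≤ t := by simpa [hAdef] using hw
      simp [hBdef, (hsu.le.trans hw'.1), hw'.2]
    have hsA : s ∉ A := by
      intro hs
      have : u ≤ s ∧ s ≤ t := by simpa [hAdef] using hs
      exact absurd (hsu.trans_le this.1) (lt_irrefl s)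
    have hins : insert s A ⊆ B := by
      intro w hw
      rcases Finset.mem_insert.mp hw with rfl | hw
      · simp [hBdef, hst]
      · exact hsubset hw
    have := Finset.card_le_card hins
    rw [Finset.card_insert_of_notMem hsA] at this
    omega

lemma one_sub_zeta_pow_card :
    ((1 - Matrix.of (zeta : P → P → Polynomial ℤ)) ^ Fintype.card P) = 0 := by
  refine Matrix.ext fun s t => ?_
  rw [Matrix.zero_apply]
  by_contra hc
  have h1 := nilpotent_aux (Fintype.card P) s t hc
  have h2 : (Finset.univ.filter fun u => s ≤ u ∧ u ≤ t).card ≤ Fintype.card P :=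
    le_trans (Finset.card_filter_le _ _) (by simp)
  omega

lemma geom_inv_right (n : Matrix P P (Polynomial ℤ)) (hz : n ^ Fintype.card P = 0) :
    (∑ k ∈ Finset.range (Fintype.card P), n ^ k) * (1 - n) = 1 := by
  rw [show (1 - n : Matrix P P (Polynomial ℤ)) = -(n - 1) from (neg_sub n 1).symm, mul_neg,
    geom_sum_mul, hz]
  simp

lemma geom_inv_left (n : Matrix P P (Polynomial ℤ)) (hz : n ^ Fintype.card P = 0) :
    (1 - n) * (∑ k ∈ Finset.range (Fintype.card P), n ^ k) = 1 := by
  rw [show (1 - n : Matrix P P (Polynomial ℤ)) = -(n - 1) from (neg_sub n 1).symm, neg_mul,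
    mul_geom_sum, hz]
  simp

lemma invInc_zeta_conv : conv (invInc (zeta : P → P → Polynomial ℤ)) zeta = delta := by
  rw [conv_eq_mul, delta_eq_one, invInc_eq]
  have h := geom_inv_right (1 - Matrix.of (zeta : P → P → Polynomial ℤ))
    one_sub_zeta_pow_card
  rw [sub_sub_cancel] at h
  exact h

lemma zeta_conv_invInc : conv (zeta : P → P → Polynomial ℤ) (invInc zeta) = delta := by
  rw [conv_eq_mul, delta_eq_one, invInc_eq]
  have h := geom_inv_left (1 - Matrix.of (zeta : P → P → Polynomial ℤ))
    one_sub_zeta_pow_card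
  rw [sub_sub_cancel] at h
  exact h

/-! ### Rank facts -/

variable {rk : P → P → ℤ}

lemma rk_self (h : IsWeakRank rk) (s : P) : rk s s = 0 := by
  have := h.2 s s s le_rfl le_rfl
  omega

lemma rk_nonneg (h : IsWeakRank rk) {s t : P} (hst : s ≤ t) : 0 ≤ rk s t := by
  rcases hst.lt_or_eq with hlt | rfl
  · exact (h.1 s t hlt).le
  · rw [rk_self h]

/-! ### Support and degree facts -/

lemma conv_support {a b : P → P → Polynomial ℤ}
    (ha : ∀ s t : P, ¬ s ≤ t → a s t = 0) (hb : ∀ s t : P, ¬ s ≤ t → b s t = 0) :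
    ∀ s t : P, ¬ s ≤ t → conv a b s t = 0 := by
  intro s t hst
  refine Finset.sum_eq_zero fun u _ => ?_
  by_cases h1 : s ≤ u
  · by_cases h2 : u ≤ t
    · exact absurd (h1.trans h2) hst
    · rw [hb u t h2, mul_zero]
  · rw [ha s u h1, zero_mul]

lemma delta_support : ∀ s t : P, ¬ s ≤ t → (delta : P → P → Polynomial ℤ) s t = 0 := by
  intro s t hst
  have : s ≠ t := fun he => hst (he.le)
  simp [delta, this]

lemma zeta_support : ∀ s t : P, ¬ s ≤ t → (zeta : P → P → Polynomial ℤ) s t = 0 := by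
  intro s t hst
  simp [zeta, hst]

lemma convPow_support (k : ℕ) :
    ∀ s t : P, ¬ s ≤ t → convPow (delta - zeta) k s t = 0 := by
  induction k with
  | zero => exact delta_support
  | succ k ih =>
    refine conv_support ?_ ih
    intro s t hst
    have h1 := delta_support s t hst
    have h2 := zeta_support s t hst
    simp only [Pi.sub_apply, h1, h2, sub_zero]

lemma invInc_zeta_support :
    ∀ s t : P, ¬ s ≤ t → invInc (zeta : P → P → Polynomial ℤ) s t = 0 := by
  intro s t hst
  rw [invInc]
  rw [show ((∑ k ∈ Finset.range (Fintype.card P), convPow (delta - zeta) k :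
      P → P → Polynomial ℤ)) s t = ∑ k ∈ Finset.range (Fintype.card P),
      convPow (delta - zeta) k s t by simp]
  exact Finset.sum_eq_zero fun k _ => convPow_support k s t hst

lemma delta_sub_zeta_deg0 (s t : P) :
    ((delta - zeta : P → P → Polynomial ℤ) s t).natDegree = 0 := by
  simp only [Pi.sub_apply, delta, zeta]
  split <;> split <;> simp

lemma conv_deg0 {a b : P → P → Polynomial ℤ}
    (ha : ∀ s t : P, (a s t).natDegree = 0) (hb : ∀ s t : P, (b s t).natDegree = 0) :
    ∀ s t : P, (conv a b s t).natDegree = 0 := by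
  intro s t
  refine Nat.le_zero.mp (Polynomial.natDegree_sum_le_of_forall_le _ _ fun u _ => ?_)
  calc (a s u * b u t).natDegree ≤ (a s u).natDegree + (b u t).natDegree :=
        Polynomial.natDegree_mul_le
    _ = 0 := by rw [ha, hb]

lemma convPow_deg0 (k : ℕ) (s t : P) :
    (convPow (delta - zeta : P → P → Polynomial ℤ) k s t).natDegree = 0 := by
  induction k generalizing s t with
  | zero =>
    simp only [convPow, delta]
    split <;> simp
  | succ k ih => exact conv_deg0 delta_sub_zeta_deg0 (fun u v => ih u v) s t

lemma invInc_zeta_deg0 (s t : P) :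
    (invInc (zeta : P → P → Polynomial ℤ) s t).natDegree = 0 := by
  rw [invInc]
  rw [show ((∑ k ∈ Finset.range (Fintype.card P), convPow (delta - zeta) k :
      P → P → Polynomial ℤ)) s t = ∑ k ∈ Finset.range (Fintype.card P),
      convPow (delta - zeta) k s t by simp]
  exact Nat.le_zero.mp (Polynomial.natDegree_sum_le_of_forall_le _ _
    fun k _ => (convPow_deg0 k s t).le)

/-! ### InJ lemmas -/

lemma InJ_zeta (h : IsWeakRank rk) : InJ rk (zeta : P → P → Polynomial ℤ) := by
  refine ⟨zeta_support, fun s t hst => ?_⟩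
  have h0 := rk_nonneg h hst
  simp [zeta, hst]
  omega

lemma InJ_invInc_zeta (h : IsWeakRank rk) :
    InJ rk (invInc (zeta : P → P → Polynomial ℤ)) := by
  refine ⟨invInc_zeta_support, fun s t hst => ?_⟩
  have h0 := rk_nonneg h hst
  rw [invInc_zeta_deg0]
  omega

lemma InJ_conv (h : IsWeakRank rk) {a b : P → P → Polynomial ℤ}
    (ha : InJ rk a) (hb : InJ rk b) : InJ rk (conv a b) := by
  refine ⟨conv_support ha.1 hb.1, fun s t hst => ?_⟩
  have h0 := rk_nonneg h hst
  have key : (conv a b s t).natDegree ≤ (rk s t).toNat := by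
    refine Polynomial.natDegree_sum_le_of_forall_le _ _ fun u _ => ?_
    by_cases hsu : s ≤ u
    · by_cases hut : u ≤ t
      · have d1 := ha.2 s u hsu
        have d2 := hb.2 u t hut
        have dm : (a s u * b u t).natDegree ≤ (a s u).natDegree + (b u t).natDegree :=
          Polynomial.natDegree_mul_le
        have hr := h.2 s u t hsu hut
        omega
      · rw [hb.1 u t hut, mul_zero]; simp
    · rw [ha.1 s u hsu, zero_mul]; simp
  omega

lemma InJ_rev (h : IsWeakRank rk) {a : P → P → Polynomial ℤ} (ha : InJ rk a) :
    InJ rk (rev rk a) := by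
  constructor
  · intro s t hst
    rw [rev, ha.1 s t hst, Polynomial.reflect_zero]
  · intro s t hst
    have h0 := rk_nonneg h hst
    have hd := ha.2 s t hst
    have : (a s t).natDegree ≤ (rk s t).toNat := by omega
    have := natDegree_reflect_le this
    rw [rev]
    omega

/-! ### Reversal lemmas -/

lemma rev_rev (rk : P → P → ℤ) (a : P → P → Polynomial ℤ) :
    rev rk (rev rk a) = a := by
  funext s t
  rw [rev, rev, reflect_reflect]

lemma rev_delta (h : IsWeakRank rk) : rev rk (delta : P → P → Polynomial ℤ) = delta := by
  funext s t
  rw [rev]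
  by_cases hst : s = t
  · subst hst
    rw [rk_self h]
    simp only [delta, if_pos rfl]
    ext i
    simp [Polynomial.coeff_reflect, Polynomial.revAt]
  · simp [delta, hst]

lemma rev_conv (h : IsWeakRank rk) {a b : P → P → Polynomial ℤ}
    (ha : InJ rk a) (hb : InJ rk b) :
    rev rk (conv a b) = conv (rev rk a) (rev rk b) := by
  funext s t
  rw [rev]
  show (conv a b s t).reflect (rk s t).toNat = conv (rev rk a) (rev rk b) s t
  rw [conv, conv, reflect_sum]
  refine Finset.sum_congr rfl fun u _ => ?_
  by_cases hsu : s ≤ u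
  · by_cases hut : u ≤ t
    · have hr := h.2 s u t hsu hut
      have h1 := rk_nonneg h hsu
      have h2 := rk_nonneg h hut
      have key : (rk s t).toNat = (rk s u).toNat + (rk u t).toNat := by omega
      have d1 : (a s u).natDegree ≤ (rk s u).toNat := by
        have := ha.2 s u hsu; omega
      have d2 : (b u t).natDegree ≤ (rk u t).toNat := by
        have := hb.2 u t hut; omega
      rw [key, Polynomial.reflect_mul _ _ d1 d2, rev, rev]
    · rw [hb.1 u t hut, mul_zero, Polynomial.reflect_zero,
        show rev rk b u t = 0 by rw [rev, hb.1 u t hut, Polynomial.reflect_zero], mul_zero]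
  · rw [ha.1 s u hsu, zero_mul, Polynomial.reflect_zero,
      show rev rk a s u = 0 by rw [rev, ha.1 s u hsu, Polynomial.reflect_zero], zero_mul]

end CharKernelAux
end AuxKernel

/-- The characteristic function `χ = ζ⁻¹·ζ^rev` of a weakly ranked poset is a kernel,
i.e. `χ⁻¹ = χ^rev`. -/
theorem charFn_isKernel {P : Type*} [PartialOrder P] [Fintype P]
    (rk : P → P → ℤ) (h : IsWeakRank rk) :
    IsKernel rk (charFn rk) := by
  classical
  open CharKernelAux in
  have hJZ : InJ rk (zeta : P → P → Polynomial ℤ) := InJ_zeta h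
  have hJM : InJ rk (invInc (zeta : P → P → Polynomial ℤ)) := InJ_invInc_zeta h
  have hJrZ : InJ rk (rev rk (zeta : P → P → Polynomial ℤ)) := InJ_rev h hJZ
  have hJrM : InJ rk (rev rk (invInc (zeta : P → P → Polynomial ℤ))) := InJ_rev h hJM
  have hMZ : conv (invInc (zeta : P → P → Polynomial ℤ)) zeta = delta := invInc_zeta_conv
  have hZM : conv (zeta : P → P → Polynomial ℤ) (invInc zeta) = delta := zeta_conv_invInc
  -- rev μ * rev ζ = δ and rev ζ * rev μ = δ
  have hrMZ : conv (rev rk (invInc (zeta : P → P → Polynomial ℤ))) (rev rk zeta) = delta := by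
    rw [← rev_conv h hJM hJZ, hMZ, rev_delta h]
  have hrZM : conv (rev rk (zeta : P → P → Polynomial ℤ)) (rev rk (invInc zeta)) = delta := by
    rw [← rev_conv h hJZ hJM, hZM, rev_delta h]
  -- rev χ = rev μ * ζ
  have hrchi : rev rk (charFn rk) =
      conv (rev rk (invInc (zeta : P → P → Polynomial ℤ))) zeta := by
    rw [charFn, rev_conv h hJM hJrZ, rev_rev]
  refine ⟨InJ_conv h hJM hJrZ, ?_, ?_⟩
  · rw [hrchi, charFn,
      conv_assoc (invInc zeta) (rev rk zeta) (conv (rev rk (invInc zeta)) zeta),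
      ← conv_assoc (rev rk zeta) (rev rk (invInc zeta)) zeta, hrZM, delta_conv, hMZ]
  · rw [hrchi, charFn,
      conv_assoc (rev rk (invInc zeta)) zeta (conv (invInc zeta) (rev rk zeta)),
      ← conv_assoc zeta (invInc zeta) (rev rk zeta), hZM, delta_conv, hrMZ]
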